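/- Conversely, if A ∈ ℝ^{N×N} is Schur stable, then there exist E, F, P ∈ ℝ^{N×N} with P symmetric such that A = E⁻¹F and the block matrix [[E + Eᵀ - P, Fᵀ],[F, P]] is positive definite. -/

import Mathlib

open Matrix

def SchurStable {N : ℕ} (A : Matrix (Fin N) (Fin N) ℝ) : Prop :=
  ∀ μ ∈ spectrum ℂ (A.map Complex.ofReal), ‖μ‖ < 1

private lemma star_triv {ι : Type*} (v : ι → ℝ) : star v = v :=
  funext fun i => star_trivial (v i)

private lemma dot_self_nonneg {ι : Type*} [Fintype ι] (v : ι → ℝ) : 0 ≤ v ⬝ᵥ v :=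
  Finset.sum_nonneg fun i _ => mul_self_nonneg (v i)

private lemma dot_self_pos {ι : Type*} [Fintype ι] {v : ι → ℝ} (hv : v ≠ 0) : 0 < v ⬝ᵥ v := by
  have := (Matrix.dotProduct_star_self_pos_iff (R := ℝ) (v := v)).mpr hv
  rwa [star_triv] at this

private lemma sum_mulVec' {N : ℕ} {ι : Type*} (s : Finset ι)
    (M : ι → Matrix (Fin N) (Fin N) ℝ) (v : Fin N → ℝ) :
    (∑ k ∈ s, M k) *ᵥ v = ∑ k ∈ s, (M k *ᵥ v) := by
  ext j
  simp only [Matrix.mulVec, dotProduct, Finset.sum_apply, Matrix.sum_apply,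
    Finset.sum_mul]
  exact Finset.sum_comm

open scoped Matrix.Norms.L2Operator in
private lemma schur_key {N : ℕ} (A : Matrix (Fin N) (Fin N) ℝ) (hA : SchurStable A) :
    ∃ n : ℕ, 1 ≤ n ∧ ∀ x : Fin N → ℝ, x ≠ 0 →
      (A ^ n *ᵥ x) ⬝ᵥ (A ^ n *ᵥ x) < x ⬝ᵥ x := by
  rcases Nat.eq_zero_or_pos N with hN | hN
  · subst hN
    exact ⟨1, le_refl 1, fun x hx => absurd (Subsingleton.elim x 0) hx⟩
  haveI : Nonempty (Fin N) := ⟨⟨0, hN⟩⟩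
  set M : Matrix (Fin N) (Fin N) ℂ := A.map Complex.ofReal with hM
  have hnonempty : (spectrum ℂ M).Nonempty := spectrum.nonempty M
  have hrad : spectralRadius ℂ M < 1 := by
    have h1 : ∀ k ∈ spectrum ℂ M, ‖k‖₊ < (1 : NNReal) := by
      intro k hk
      have := hA k hk
      exact_mod_cast this
    have := spectrum.spectralRadius_lt_of_forall_lt_of_nonempty hnonempty h1
    simpa using this
  have hg := spectrum.pow_nnnorm_pow_one_div_tendsto_nhds_spectralRadius M
  obtain ⟨n, hn1, hn⟩ :=
    ((Filter.eventually_ge_atTop 1).and (hg.eventually_lt_const hrad)).exists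
  have hltn : ‖M ^ n‖₊ < 1 := by
    by_contra h
    push_neg at h
    have h1 : (1 : ENNReal) ≤ (‖M ^ n‖₊ : ENNReal) ^ (1 / (n : ℝ)) := by
      calc (1 : ENNReal) = 1 ^ (1 / (n : ℝ)) := (ENNReal.one_rpow _).symm
        _ ≤ _ := ENNReal.rpow_le_rpow (by exact_mod_cast h) (by positivity)
    exact absurd hn (not_lt.mpr h1)
  have hlt : ‖M ^ n‖ < 1 := by exact_mod_cast hltn
  refine ⟨n, hn1, fun x hx => ?_⟩
  -- transfer to complex Euclidean space
  have hnorm : ∀ v : Fin N → ℝ,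
      ‖(EuclideanSpace.equiv (Fin N) ℂ).symm (fun i => ((v i : ℂ)))‖ = Real.sqrt (v ⬝ᵥ v) := by
    intro v
    rw [EuclideanSpace.norm_eq]
    congr 1
    simp [dotProduct, sq]
  have hpow : M ^ n = (A ^ n).map Complex.ofReal := by
    have h := map_pow (Complex.ofRealHom.mapMatrix) A n
    simp only [RingHom.mapMatrix_apply] at h; exact h.symm
  have hmv : (M ^ n) *ᵥ (fun i => ((x i : ℂ))) = fun j => (((A ^ n *ᵥ x) j : ℂ)) := by
    rw [hpow]
    ext j
    simp only [Matrix.mulVec, dotProduct, Matrix.map_apply]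
    push_cast
    rfl
  have hle := (M ^ n).l2_opNorm_mulVec ((EuclideanSpace.equiv (Fin N) ℂ).symm (fun i => ((x i : ℂ))))
  rw [show ((M ^ n) *ᵥ ((EuclideanSpace.equiv (Fin N) ℂ).symm (fun i => ((x i : ℂ)))))
      = fun j => (((A ^ n *ᵥ x) j : ℂ)) from hmv] at hle
  rw [hnorm x] at hle
  have hle2 : Real.sqrt ((A ^ n *ᵥ x) ⬝ᵥ (A ^ n *ᵥ x)) ≤ ‖M ^ n‖ * Real.sqrt (x ⬝ᵥ x) := by
    have := hnorm (A ^ n *ᵥ x)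
    calc Real.sqrt ((A ^ n *ᵥ x) ⬝ᵥ (A ^ n *ᵥ x))
        = ‖(EuclideanSpace.equiv (Fin N) ℂ).symm (fun i => (((A ^ n *ᵥ x) i : ℂ)))‖ := this.symm
      _ ≤ ‖M ^ n‖ * Real.sqrt (x ⬝ᵥ x) := hle
  have hxpos : 0 < x ⬝ᵥ x := dot_self_pos hx
  have hnn : 0 ≤ ‖M ^ n‖ := norm_nonneg _
  calc (A ^ n *ᵥ x) ⬝ᵥ (A ^ n *ᵥ x)
      = Real.sqrt ((A ^ n *ᵥ x) ⬝ᵥ (A ^ n *ᵥ x)) ^ 2 :=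
        (Real.sq_sqrt (dot_self_nonneg _)).symm
    _ ≤ (‖M ^ n‖ * Real.sqrt (x ⬝ᵥ x)) ^ 2 := by
        apply pow_le_pow_left₀ (Real.sqrt_nonneg _) hle2
    _ = ‖M ^ n‖ ^ 2 * (x ⬝ᵥ x) := by
        rw [mul_pow, Real.sq_sqrt hxpos.le]
    _ < 1 * (x ⬝ᵥ x) :=
        mul_lt_mul_of_pos_right (pow_lt_one₀ hnn hlt (by norm_num)) hxpos
    _ = x ⬝ᵥ x := one_mul _

theorem stmt14 {N : ℕ} (A : Matrix (Fin N) (Fin N) ℝ) (hA : SchurStable A) :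
    ∃ E F P : Matrix (Fin N) (Fin N) ℝ, Pᵀ = P ∧ A = E⁻¹ * F ∧
      (Matrix.fromBlocks (E + Eᵀ - P) Fᵀ F P).PosDef := by
  classical
  obtain ⟨n, hn1, hkey⟩ := schur_key A hA
  set P : Matrix (Fin N) (Fin N) ℝ := ∑ k ∈ Finset.range n, ((A ^ k)ᵀ * A ^ k) with hPdef
  have hPsym : Pᵀ = P := by
    rw [hPdef, Matrix.transpose_sum]
    exact Finset.sum_congr rfl fun k _ => by
      rw [Matrix.transpose_mul, Matrix.transpose_transpose]
  have hq : ∀ (B : Matrix (Fin N) (Fin N) ℝ) (v : Fin N → ℝ),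
      v ⬝ᵥ ((Bᵀ * B) *ᵥ v) = (B *ᵥ v) ⬝ᵥ (B *ᵥ v) := by
    intro B v
    rw [← Matrix.mulVec_mulVec, Matrix.dotProduct_mulVec, Matrix.vecMul_transpose]
  have dot_sum : ∀ (v : Fin N → ℝ) (w : ℕ → Fin N → ℝ) (s : Finset ℕ),
      v ⬝ᵥ (∑ k ∈ s, w k) = ∑ k ∈ s, v ⬝ᵥ w k := by
    intro v w s
    simp only [dotProduct, Finset.sum_apply, Finset.mul_sum]
    exact Finset.sum_comm
  have hPq : ∀ v : Fin N → ℝ, v ⬝ᵥ (P *ᵥ v)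
      = ∑ k ∈ Finset.range n, (A ^ k *ᵥ v) ⬝ᵥ (A ^ k *ᵥ v) := by
    intro v
    rw [hPdef, sum_mulVec', dot_sum]
    exact Finset.sum_congr rfl fun k _ => hq _ v
  have hPpos : P.PosDef := by
    refine Matrix.PosDef.of_dotProduct_mulVec_pos ?_ fun x hx => ?_
    · rw [Matrix.IsHermitian, Matrix.conjTranspose_eq_transpose_of_trivial, hPsym]
    · rw [star_triv, hPq]
      have h0 : x ⬝ᵥ x ≤ ∑ k ∈ Finset.range n, (A ^ k *ᵥ x) ⬝ᵥ (A ^ k *ᵥ x) := by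
        have := Finset.single_le_sum (f := fun k => (A ^ k *ᵥ x) ⬝ᵥ (A ^ k *ᵥ x))
          (fun k _ => dot_self_nonneg _) (Finset.mem_range.mpr hn1)
        simpa [Matrix.one_mulVec] using this
      exact lt_of_lt_of_le (dot_self_pos hx) h0
  have htel : P - Aᵀ * P * A = 1 - (A ^ n)ᵀ * A ^ n := by
    have h2 : Aᵀ * P * A = ∑ k ∈ Finset.range n, ((A ^ (k + 1))ᵀ * A ^ (k + 1)) := by
      rw [hPdef, Finset.mul_sum, Finset.sum_mul]
      refine Finset.sum_congr rfl fun k _ => ?_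
      rw [pow_succ, Matrix.transpose_mul]
      noncomm_ring
    rw [hPdef, h2, ← Finset.sum_sub_distrib,
      Finset.sum_range_sub' (fun k => (A ^ k)ᵀ * A ^ k) n]
    simp
  have hSq : ∀ x : Fin N → ℝ, x ≠ 0 → 0 < x ⬝ᵥ ((P - Aᵀ * P * A) *ᵥ x) := by
    intro x hx
    rw [htel, Matrix.sub_mulVec, dotProduct_sub, Matrix.one_mulVec, hq]
    exact sub_pos.mpr (hkey x hx)
  have hsymm : ∀ a b : Fin N → ℝ, a ⬝ᵥ (P *ᵥ b) = b ⬝ᵥ (P *ᵥ a) := by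
    intro a b
    calc a ⬝ᵥ (P *ᵥ b) = (a ᵥ* P) ⬝ᵥ b := Matrix.dotProduct_mulVec a P b
      _ = (P *ᵥ a) ⬝ᵥ b := by conv_lhs => rw [← hPsym, Matrix.vecMul_transpose]
      _ = b ⬝ᵥ (P *ᵥ a) := dotProduct_comm _ _
  have htr : ∀ v w : Fin N → ℝ, v ⬝ᵥ (Aᵀ *ᵥ w) = (A *ᵥ v) ⬝ᵥ w := by
    intro v w
    rw [Matrix.dotProduct_mulVec, Matrix.vecMul_transpose]
  have hPunit : IsUnit P.det := hPpos.det_pos.ne'.isUnit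
  refine ⟨P, P * A, P, hPsym, ?_, ?_⟩
  · rw [← Matrix.mul_assoc, Matrix.nonsing_inv_mul P hPunit, Matrix.one_mul]
  · have hEq : P + Pᵀ - P = P := by rw [hPsym]; exact add_sub_cancel_right P P
    have hFt : (P * A)ᵀ = Aᵀ * P := by rw [Matrix.transpose_mul, hPsym]
    rw [hEq, hFt]
    refine Matrix.PosDef.of_dotProduct_mulVec_pos ?_ fun z hz => ?_
    · rw [Matrix.IsHermitian, Matrix.conjTranspose_eq_transpose_of_trivial,
        Matrix.fromBlocks_transpose]
      rw [hPsym, Matrix.transpose_mul, Matrix.transpose_mul, hPsym,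
        Matrix.transpose_transpose]
    · set x := z ∘ Sum.inl with hxdef
      set y := z ∘ Sum.inr with hydef
      have hz' : z = Sum.elim x y := (Sum.elim_comp_inl_inr z).symm
      rw [star_triv, hz', Matrix.fromBlocks_mulVec, sumElim_dotProduct_sumElim]
      simp only [Sum.elim_comp_inl, Sum.elim_comp_inr]
      have e1 : x ⬝ᵥ ((Aᵀ * P) *ᵥ y) = (A *ᵥ x) ⬝ᵥ (P *ᵥ y) := by
        rw [← Matrix.mulVec_mulVec, htr]
      have e2 : y ⬝ᵥ ((P * A) *ᵥ x) = y ⬝ᵥ (P *ᵥ (A *ᵥ x)) := by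
        rw [← Matrix.mulVec_mulVec]
      have e3 : x ⬝ᵥ ((Aᵀ * P * A) *ᵥ x) = (A *ᵥ x) ⬝ᵥ (P *ᵥ (A *ᵥ x)) := by
        rw [Matrix.mul_assoc, ← Matrix.mulVec_mulVec, ← Matrix.mulVec_mulVec, htr]
      have e4 : (A *ᵥ x) ⬝ᵥ (P *ᵥ y) = y ⬝ᵥ (P *ᵥ (A *ᵥ x)) := hsymm _ _
      have hid : x ⬝ᵥ (P *ᵥ x + (Aᵀ * P) *ᵥ y) + y ⬝ᵥ ((P * A) *ᵥ x + P *ᵥ y)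
          = x ⬝ᵥ ((P - Aᵀ * P * A) *ᵥ x)
            + (y + A *ᵥ x) ⬝ᵥ (P *ᵥ (y + A *ᵥ x)) := by
        simp only [Matrix.sub_mulVec, Matrix.mulVec_add, dotProduct_add,
          add_dotProduct, dotProduct_sub]
        rw [e1, e2, e3, e4]
        ring
      rw [hid]
      rcases eq_or_ne x 0 with hx0 | hx0
      · have hy : y ≠ 0 := by
          intro hy0
          apply hz
          rw [hz', hx0, hy0]
          funext i
          cases i <;> rfl
        have h1 : 0 < y ⬝ᵥ (P *ᵥ y) := by
          have := hPpos.dotProduct_mulVec_pos hy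
          rwa [star_triv] at this
        rw [hx0]
        simpa [Matrix.mulVec_zero] using h1
      · have h1 : 0 < x ⬝ᵥ ((P - Aᵀ * P * A) *ᵥ x) := hSq x hx0
        have h2 : 0 ≤ (y + A *ᵥ x) ⬝ᵥ (P *ᵥ (y + A *ᵥ x)) := by
          rcases eq_or_ne (y + A *ᵥ x) 0 with h | h
          · rw [h]; simp
          · have := hPpos.dotProduct_mulVec_pos h
            rw [star_triv] at this
            exact this.le
        linarith
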